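/- The DDIM posterior mean formula equals the DDPM posterior mean formula: for ε̂ := (x_t - sqrt(ᾱ_t) x̂_0)/sqrt(1-ᾱ_t), one has sqrt(ᾱ_{t-1}) x̂_0 + sqrt(1-ᾱ_{t-1}-σ_t²) ε̂ = (sqrt(ᾱ_{t-1})(1-α_t)/(1-ᾱ_t)) x̂_0 + (sqrt(α_t)(1-ᾱ_{t-1})/(1-ᾱ_t)) x_t, where σ_t² = (1-α_t)(1-ᾱ_{t-1})/(1-ᾱ_t). -/

import Mathlib

open Real

theorem stmt_2 {E : Type*} [NormedAddCommGroup E] [NormedSpace ℝ E]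
    (xt x0hat : E) (αt ab1 ab σsq : ℝ)
    (hαt : 0 < αt ∧ αt < 1) (hab1 : 0 < ab1 ∧ ab1 < 1)
    (hab : ab = αt * ab1)
    (hσ : σsq = (1 - αt) * (1 - ab1) / (1 - ab))
    (εhat : E)
    (hε : εhat = (Real.sqrt (1 - ab))⁻¹ • (xt - Real.sqrt ab • x0hat)) :
    Real.sqrt ab1 • x0hat + Real.sqrt (1 - ab1 - σsq) • εhat
      = (Real.sqrt ab1 * (1 - αt) / (1 - ab)) • x0hat
        + (Real.sqrt αt * (1 - ab1) / (1 - ab)) • xt := by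
  obtain ⟨hαt0, hαt1⟩ := hαt
  obtain ⟨hab10, hab11⟩ := hab1
  have habpos : 0 < ab := by rw [hab]; positivity
  have hablt : ab < 1 := by
    rw [hab]
    nlinarith
  have h1ab : (0:ℝ) < 1 - ab := by linarith
  have h1ab1 : (0:ℝ) < 1 - ab1 := by linarith
  have hsq : Real.sqrt (1 - ab) * Real.sqrt (1 - ab) = 1 - ab :=
    Real.mul_self_sqrt h1ab.le
  have hsqne : Real.sqrt (1 - ab) ≠ 0 := by positivity
  have hkey : Real.sqrt (1 - ab1 - σsq)
      = Real.sqrt αt * (1 - ab1) / Real.sqrt (1 - ab) := by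
    have : 1 - ab1 - σsq = (Real.sqrt αt * (1 - ab1) / Real.sqrt (1 - ab))^2 := by
      have hαsq : Real.sqrt αt ^ 2 = αt := Real.sq_sqrt hαt0.le
      rw [div_pow, mul_pow, Real.sq_sqrt hαt0.le, Real.sq_sqrt h1ab.le, hσ]
      field_simp
      rw [hab]
      ring
    rw [this, Real.sqrt_sq (by positivity)]
  have habprod : Real.sqrt ab = Real.sqrt αt * Real.sqrt ab1 := by
    rw [hab, Real.sqrt_mul hαt0.le]
  rw [hε, hkey, habprod]
  match_scalars
  · have hαα : Real.sqrt αt * Real.sqrt αt = αt := Real.mul_self_sqrt hαt0.le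
    field_simp
    rw [Real.sq_sqrt h1ab.le, Real.sq_sqrt hαt0.le]
    linear_combination (ab - 1) * hab
  · field_simp
    rw [Real.sq_sqrt h1ab.le]
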